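/- Fix N ≥ 2, privacy sensitivities α_1,…,α_N ∈ (0,1), and constants κ, L_F, c, S > 0. Suppose σ** ∈ (0,∞)^N satisfies the social-optimum first-order conditions: for every i, κ·(Σ_{j=1}^N (1−α_j))·T^{-3/2}·(T^{-1/2} + L_F)/L_F = α_i·c·S·σ_i**, where T = Σ_{j=1}^N (σ_j**)^{-2}. Define for each i the penalty coefficient β_i = N²·κ·(Σ_{j≠i}(1−α_j))·T^{-3/2}·(T^{-1/2} + L_F) / (2·(N−1)²·L_F·(σ_i**)⁴). Then for every i, the priced cost J̄_i(σ) = (1−α_i)·κ·Δ_i(σ)·(1 + Δ_i(σ)/(2 L_F)) + α_i·c·S/σ + β_i·(((N−1)/N)²·σ² + (1/N²)·Σ_{j≠i}(σ_j**)²), where Δ_i(σ) = (σ^{-2} + Σ_{j≠i}(σ_j**)^{-2})^{-1/2}, has derivative zero at σ = σ_i**. Hence under this pricing scheme the socially optimal noise profile satisfies every client's first-order equilibrium condition, so the mechanism attains the social optimum (price-of-anarchy ratio γ = 1). -/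

import Mathlib

open Finset

/-- Pricing mechanism under complete information: if `σs` satisfies the social-optimum
first-order conditions, and the penalty coefficients `β i` are chosen as
`β_i = N²·κ·(∑_{j≠i}(1−α_j))·T^{-3/2}·(T^{-1/2}+L_F) / (2(N−1)²·L_F·σs_i⁴)` with
`T = ∑ j σs_j^{-2}`, then every client's priced expected cost
`J̄_i(σ) = (1−α_i)·κ·Δ_i(σ)·(1+Δ_i(σ)/(2L_F)) + α_i·c·S/σ
  + β_i·(((N−1)/N)²·σ² + (1/N²)·∑_{j≠i} σs_j²)`,
with `Δ_i(σ) = (σ^{-2} + ∑_{j≠i} σs_j^{-2})^{-1/2}`, has derivative zero at `σ = σs_i`: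
the socially optimal profile satisfies every client's first-order equilibrium condition. -/
theorem stmt_14 (N : ℕ) (hN : 2 ≤ N) (α : Fin N → ℝ) (hα : ∀ i, 0 < α i ∧ α i < 1)
    (κ L_F c S : ℝ) (hκ : 0 < κ) (hL : 0 < L_F) (hc : 0 < c) (hS : 0 < S)
    (σs : Fin N → ℝ) (hpos : ∀ i, 0 < σs i)
    (T : ℝ) (hT : T = ∑ j, ((σs j) ^ 2)⁻¹)
    (hfoc : ∀ i, κ * (∑ j, (1 - α j)) * T ^ (-(3 / 2) : ℝ) *
      (T ^ (-(1 / 2) : ℝ) + L_F) / L_F = α i * c * S * σs i)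
    (β : Fin N → ℝ)
    (hβ : ∀ i, β i = (N : ℝ) ^ 2 * κ * (∑ j ∈ Finset.univ.erase i, (1 - α j)) *
      T ^ (-(3 / 2) : ℝ) * (T ^ (-(1 / 2) : ℝ) + L_F) /
      (2 * ((N : ℝ) - 1) ^ 2 * L_F * (σs i) ^ 4)) :
    ∀ i, deriv (fun σ : ℝ =>
      (1 - α i) * κ * (((σ ^ 2)⁻¹ + ∑ j ∈ Finset.univ.erase i, ((σs j) ^ 2)⁻¹) ^ (-(1 / 2) : ℝ)) *
        (1 + (((σ ^ 2)⁻¹ + ∑ j ∈ Finset.univ.erase i, ((σs j) ^ 2)⁻¹) ^ (-(1 / 2) : ℝ)) /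
          (2 * L_F)) +
      α i * c * S / σ +
      β i * ((((N : ℝ) - 1) / N) ^ 2 * σ ^ 2 +
        (1 / (N : ℝ) ^ 2) * ∑ j ∈ Finset.univ.erase i, (σs j) ^ 2)) (σs i) = 0 := by
  intro i
  have hs : 0 < σs i := hpos i
  set R : ℝ := ∑ j ∈ Finset.univ.erase i, ((σs j) ^ 2)⁻¹ with hR
  have hTR : T = ((σs i) ^ 2)⁻¹ + R := by
    rw [hT, hR, ← Finset.add_sum_erase _ _ (Finset.mem_univ i)]
  have hR0 : 0 ≤ R := Finset.sum_nonneg fun j _ => by positivity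
  have hT0 : 0 < T := by rw [hTR]; positivity
  have hu : HasDerivAt (fun σ : ℝ => (σ ^ 2)⁻¹ + R)
      (-(2 * σs i) / ((σs i) ^ 2) ^ 2) (σs i) := by
    have h0 := ((hasDerivAt_pow 2 (σs i)).inv (by positivity)).add_const R
    simpa using h0
  have hrpow : HasDerivAt (fun x : ℝ => x ^ (-(1 / 2) : ℝ))
      ((-(1 / 2) : ℝ) * (((σs i) ^ 2)⁻¹ + R) ^ ((-(1 / 2) : ℝ) - 1)) (((σs i) ^ 2)⁻¹ + R) := by
    have hne : (((σs i) ^ 2)⁻¹ + R) ≠ 0 := by rw [← hTR]; exact hT0.ne'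
    exact Real.hasDerivAt_rpow_const (Or.inl hne)
  have hv : HasDerivAt (fun σ : ℝ => ((σ ^ 2)⁻¹ + R) ^ (-(1 / 2) : ℝ))
      ((-(1 / 2) : ℝ) * (((σs i) ^ 2)⁻¹ + R) ^ ((-(1 / 2) : ℝ) - 1) *
        (-(2 * σs i) / ((σs i) ^ 2) ^ 2)) (σs i) := by have := hrpow.comp (σs i) hu; exact this
  have h1 : HasDerivAt (fun σ : ℝ =>
      (1 - α i) * κ * (((σ ^ 2)⁻¹ + R) ^ (-(1 / 2) : ℝ)) *
        (1 + (((σ ^ 2)⁻¹ + R) ^ (-(1 / 2) : ℝ)) / (2 * L_F)))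
      (((1 - α i) * κ * ((-(1 / 2) : ℝ) * (((σs i) ^ 2)⁻¹ + R) ^ ((-(1 / 2) : ℝ) - 1) *
          (-(2 * σs i) / ((σs i) ^ 2) ^ 2))) *
        (1 + ((((σs i) ^ 2)⁻¹ + R) ^ (-(1 / 2) : ℝ)) / (2 * L_F)) +
        ((1 - α i) * κ * ((((σs i) ^ 2)⁻¹ + R) ^ (-(1 / 2) : ℝ))) *
          (((-(1 / 2) : ℝ) * (((σs i) ^ 2)⁻¹ + R) ^ ((-(1 / 2) : ℝ) - 1) *
            (-(2 * σs i) / ((σs i) ^ 2) ^ 2)) / (2 * L_F))) (σs i) :=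
    (hv.const_mul ((1 - α i) * κ)).mul ((hv.div_const (2 * L_F)).const_add 1)
  have h2 : HasDerivAt (fun σ : ℝ => α i * c * S / σ)
      ((0 * σs i - α i * c * S * 1) / (σs i) ^ 2) (σs i) :=
    (hasDerivAt_const (σs i) (α i * c * S)).div (hasDerivAt_id (σs i)) hs.ne'
  have h3 : HasDerivAt (fun σ : ℝ => β i * ((((N : ℝ) - 1) / N) ^ 2 * σ ^ 2 +
      (1 / (N : ℝ) ^ 2) * ∑ j ∈ Finset.univ.erase i, (σs j) ^ 2))
      (β i * ((((N : ℝ) - 1) / N) ^ 2 * ((2 : ℕ) * σs i ^ 1))) (σs i) :=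
    (((hasDerivAt_pow 2 (σs i)).const_mul ((((N : ℝ) - 1) / N) ^ 2)).add_const
      ((1 / (N : ℝ) ^ 2) * ∑ j ∈ Finset.univ.erase i, (σs j) ^ 2)).const_mul (β i)
  have hF := (h1.add h2).add h3
  simp only [Pi.add_def] at hF
  rw [hF.deriv]
  rw [← hTR]
  have hexp : T ^ ((-(1 / 2) : ℝ) - 1) = T ^ (-(3 / 2) : ℝ) := by norm_num
  rw [hexp, hβ i]
  have hsum : (∑ j, (1 - α j)) = (1 - α i) + ∑ j ∈ Finset.univ.erase i, (1 - α j) :=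
    (Finset.add_sum_erase _ _ (Finset.mem_univ i)).symm
  have hfoc' : κ * ((1 - α i) + ∑ j ∈ Finset.univ.erase i, (1 - α j)) * T ^ (-(3 / 2) : ℝ) *
      (T ^ (-(1 / 2) : ℝ) + L_F) = α i * c * S * σs i * L_F := by
    have h := hfoc i
    rw [hsum, div_eq_iff hL.ne'] at h
    linarith [h]
  have hN1 : ((N : ℝ) - 1) ≠ 0 := by
    have h2N : (2 : ℝ) ≤ (N : ℝ) := by exact_mod_cast hN
    intro h; nlinarith
  have hNne : (N : ℝ) ≠ 0 := by
    have h2N : (2 : ℝ) ≤ (N : ℝ) := by exact_mod_cast hN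
    intro h; nlinarith
  have hacS : α i * c * S = κ * ((1 - α i) + ∑ j ∈ Finset.univ.erase i, (1 - α j)) *
      T ^ (-(3 / 2) : ℝ) * (T ^ (-(1 / 2) : ℝ) + L_F) / (L_F * σs i) := by
    rw [eq_div_iff (by positivity)]
    linarith [hfoc']
  rw [hacS]
  push_cast
  field_simp
  ring
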